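/- For any positive integer l, there exists a kernel K : ℝ → ℝ of order l that is a linear combination of ⌊l/2⌋+1 indicator functions of symmetric intervals [-k, k], k = 1, ..., ⌊l/2⌋+1; i.e., there exist coefficients c_1, ..., c_{⌊l/2⌋+1} such that K = Σ_k c_k · 1_{[-k,k]} satisfies ∫K = 1 and ∫ u^j K(u) du = 0 for all j = 1, ..., l. -/
import Mathlib

open MeasureTheory Matrix

lemma kern_integrable (j : ℕ) (a : ℝ) :
    Integrable (fun u : ℝ => u ^ j * Set.indicator (Set.Icc (-a) a) (fun _ => (1:ℝ)) u) := by
  have h : (fun u : ℝ => u ^ j * Set.indicator (Set.Icc (-a) a) (fun _ => (1:ℝ)) u)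
      = Set.indicator (Set.Icc (-a) a) (fun u => u ^ j) := by
    funext u; by_cases h : u ∈ Set.Icc (-a) a <;> simp [h]
  rw [h]
  exact (integrable_indicator_iff measurableSet_Icc).2 ((continuous_pow j).integrableOn_Icc)

lemma kern_moment (j : ℕ) (a : ℝ) (ha : 0 ≤ a) :
    ∫ u : ℝ, u ^ j * Set.indicator (Set.Icc (-a) a) (fun _ => (1:ℝ)) u
      = (a ^ (j+1) - (-a) ^ (j+1)) / (j+1) := by
  have h : (fun u : ℝ => u ^ j * Set.indicator (Set.Icc (-a) a) (fun _ => (1:ℝ)) u)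
      = Set.indicator (Set.Icc (-a) a) (fun u => u ^ j) := by
    funext u; by_cases h : u ∈ Set.Icc (-a) a <;> simp [h]
  rw [h, integral_indicator measurableSet_Icc, integral_Icc_eq_integral_Ioc,
    ← intervalIntegral.integral_of_le (by linarith), integral_pow]

theorem stmt5 (l : ℕ) (hl : 0 < l) :
    ∃ c : Fin (l / 2 + 1) → ℝ,
      (∫ u : ℝ,
          (∑ k : Fin (l / 2 + 1),
            c k * Set.indicator (Set.Icc (-((k : ℝ) + 1)) ((k : ℝ) + 1)) (fun _ => (1 : ℝ)) u))
        = 1 ∧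
      ∀ j : ℕ, 1 ≤ j → j ≤ l →
        (∫ u : ℝ,
            u ^ j * (∑ k : Fin (l / 2 + 1),
              c k * Set.indicator (Set.Icc (-((k : ℝ) + 1)) ((k : ℝ) + 1)) (fun _ => (1 : ℝ)) u))
          = 0 := by
  set n := l / 2 + 1 with hn
  set v : Fin n → ℝ := fun k => ((k : ℝ) + 1) ^ 2 with hv_def
  have hv : Function.Injective v := by
    intro a b h
    have ha : (0:ℝ) ≤ (a:ℝ) := Nat.cast_nonneg _
    have hb : (0:ℝ) ≤ (b:ℝ) := Nat.cast_nonneg _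
    have h' : ((a:ℕ):ℝ) = ((b:ℕ):ℝ) := by
      simp only [hv_def] at h; nlinarith
    exact Fin.ext (Nat.cast_injective h')
  set M : Matrix (Fin n) (Fin n) ℝ :=
    fun i k => (2 / (2 * (i : ℝ) + 1)) * (((k : ℝ) + 1) * v k ^ (i : ℕ)) with hM_def
  have hM : M = Matrix.diagonal (fun i : Fin n => 2 / (2 * (i : ℝ) + 1)) *
      (Matrix.vandermonde v)ᵀ * Matrix.diagonal (fun k : Fin n => ((k : ℝ) + 1)) := by
    ext i k
    rw [Matrix.mul_diagonal, Matrix.diagonal_mul]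
    simp [hM_def, Matrix.vandermonde]
    ring
  have hdet : M.det ≠ 0 := by
    rw [hM, Matrix.det_mul, Matrix.det_mul, Matrix.det_diagonal, Matrix.det_diagonal,
      Matrix.det_transpose]
    refine mul_ne_zero (mul_ne_zero ?_ ?_) ?_
    · refine Finset.prod_ne_zero_iff.2 fun i _ => ?_
      have : (0:ℝ) ≤ (i:ℝ) := Nat.cast_nonneg _
      positivity
    · exact Matrix.det_vandermonde_ne_zero_iff.2 hv
    · refine Finset.prod_ne_zero_iff.2 fun k _ => ?_
      have : (0:ℝ) ≤ (k:ℝ) := Nat.cast_nonneg _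
      positivity
  set c : Fin n → ℝ := M⁻¹ *ᵥ Pi.single (0 : Fin n) 1 with hc_def
  have hc : M *ᵥ c = Pi.single (0 : Fin n) 1 := by
    rw [hc_def, Matrix.mulVec_mulVec, Matrix.mul_nonsing_inv _ (isUnit_iff_ne_zero.2 hdet),
      Matrix.one_mulVec]
  have key : ∀ j : ℕ,
      (∫ u : ℝ, u ^ j * ∑ k : Fin n,
          c k * Set.indicator (Set.Icc (-((k : ℝ) + 1)) ((k : ℝ) + 1)) (fun _ => (1 : ℝ)) u)
        = ∑ k : Fin n,
          c k * ((((k:ℝ)+1) ^ (j+1) - (-((k:ℝ)+1)) ^ (j+1)) / (j+1)) := by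
    intro j
    have h1 : (fun u : ℝ => u ^ j * ∑ k : Fin n,
        c k * Set.indicator (Set.Icc (-((k : ℝ) + 1)) ((k : ℝ) + 1)) (fun _ => (1 : ℝ)) u)
        = fun u => ∑ k : Fin n,
          c k * (u ^ j * Set.indicator (Set.Icc (-((k : ℝ) + 1)) ((k : ℝ) + 1))
            (fun _ => (1 : ℝ)) u) := by
      funext u
      rw [Finset.mul_sum]
      exact Finset.sum_congr rfl fun k _ => by ring
    rw [h1, integral_finset_sum _ (fun k _ => (kern_integrable j _).const_mul _)]
    refine Finset.sum_congr rfl fun k _ => ?_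
    rw [integral_const_mul, kern_moment j _ (by positivity)]
  have hmv : ∀ i : Fin n, (M *ᵥ c) i = ∑ k : Fin n, M i k * c k := by
    intro i; simp [Matrix.mulVec, dotProduct]
  refine ⟨c, ?_, ?_⟩
  · have h0 := key 0
    simp only [pow_zero, one_mul] at h0
    rw [h0]
    have := hmv 0
    rw [hc] at this
    simp only [Pi.single_eq_same] at this
    refine Eq.trans (Finset.sum_congr rfl fun k _ => ?_) this.symm
    simp only [hM_def, hv_def]
    norm_num
    ring
  · intro j hj1 hjl
    rw [key j]
    rcases Nat.even_or_odd j with he | ho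
    · -- j even: use matrix equation at row j/2
      obtain ⟨i, hi⟩ := he
      have hilt : j / 2 < n := by omega
      set i' : Fin n := ⟨j / 2, hilt⟩ with hi'_def
      have hterm : ∀ k : Fin n,
          c k * ((((k:ℝ)+1) ^ (j+1) - (-((k:ℝ)+1)) ^ (j+1)) / (j+1)) = M i' k * c k := by
        intro k
        have hodd : Odd (j+1) := ⟨i, by omega⟩
        rw [hodd.neg_pow]
        have hii : (i' : ℕ) = i := by simp only [hi'_def]; omega
        have hpow : (((k:ℝ)+1)) ^ (j+1) = ((k:ℝ)+1) * v k ^ (i' : ℕ) := by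
          rw [hii]
          simp only [hv_def, ← pow_mul]
          rw [← pow_succ']
          congr 1
          omega
        have hj' : ((j:ℝ)+1) = 2 * ((i':ℕ):ℝ) + 1 := by
          rw [hii, hi]
          push_cast
          ring
        rw [hpow]
        simp only [hM_def]
        rw [hj']
        ring
      rw [Finset.sum_congr rfl fun k _ => hterm k, ← hmv i', hc]
      have : i' ≠ 0 := by
        simp only [hi'_def, Ne, Fin.ext_iff, Fin.val_zero]
        omega
      simp [Pi.single_eq_of_ne this]
    · -- j odd: each term vanishes
      refine Finset.sum_eq_zero fun k _ => ?_
      obtain ⟨m, hm⟩ := ho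
      have heven : Even (j+1) := ⟨m+1, by omega⟩
      rw [heven.neg_pow]
      simp
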